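/- The quadruple ratio as a cross ratio equals a triple ratio of derived flags: let ((v₀,η₀), (v₁,η₁), (v₂,η₂), (v₃,η₃)) be an ordered quadruple of flags in general position, and for i ≠ j let ℓ_{ij} be a nonzero linear functional on ℝ³ vanishing on v_i and v_j. Then the cross ratio cross(η₀, ℓ₀₃, ℓ₀₂, ℓ₀₁), computed in the 2-dimensional subspace of (ℝ³)* of functionals vanishing at v₀, equals the triple ratio 𝕋((v₀,η₀), (v₃,ℓ₂₃), (v₁,ℓ₁₂)). -/

import Mathlib

lemma vanish_three_eq_zero {a b c : Fin 3 → ℝ}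
    (h : LinearIndependent ℝ ![a, b, c]) (f : (Fin 3 → ℝ) →ₗ[ℝ] ℝ)
    (ha : f a = 0) (hb : f b = 0) (hc : f c = 0) : f = 0 := by
  have hcard : Fintype.card (Fin 3) = Module.finrank ℝ (Fin 3 → ℝ) := by
    simp [Module.finrank_fin_fun]
  let B := basisOfLinearIndependentOfCardEqFinrank h hcard
  apply B.ext
  intro i
  have hB : ⇑B = ![a, b, c] :=
    coe_basisOfLinearIndependentOfCardEqFinrank h hcard
  fin_cases i <;> simp [hB, ha, hb, hc]

lemma det2_expand {S : Submodule ℝ ((Fin 3 → ℝ) →ₗ[ℝ] ℝ)} (b : Module.Basis (Fin 2) ℝ S)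
    (x y : Fin 3 → ℝ) (P Q : S) :
    (P : (Fin 3 → ℝ) →ₗ[ℝ] ℝ) x * (Q : (Fin 3 → ℝ) →ₗ[ℝ] ℝ) y
      - (P : (Fin 3 → ℝ) →ₗ[ℝ] ℝ) y * (Q : (Fin 3 → ℝ) →ₗ[ℝ] ℝ) x
      = ((b.repr P 0 * b.repr Q 1 - b.repr P 1 * b.repr Q 0)) *
        ((b 0 : (Fin 3 → ℝ) →ₗ[ℝ] ℝ) x * (b 1 : (Fin 3 → ℝ) →ₗ[ℝ] ℝ) y
          - (b 0 : (Fin 3 → ℝ) →ₗ[ℝ] ℝ) y * (b 1 : (Fin 3 → ℝ) →ₗ[ℝ] ℝ) x) := by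
  have hP : (P : (Fin 3 → ℝ) →ₗ[ℝ] ℝ)
      = b.repr P 0 • (b 0 : (Fin 3 → ℝ) →ₗ[ℝ] ℝ) + b.repr P 1 • (b 1 : (Fin 3 → ℝ) →ₗ[ℝ] ℝ) := by
    conv_lhs => rw [← b.sum_repr P]
    simp only [Fin.sum_univ_two, Submodule.coe_add, Submodule.coe_smul]
  have hQ : (Q : (Fin 3 → ℝ) →ₗ[ℝ] ℝ)
      = b.repr Q 0 • (b 0 : (Fin 3 → ℝ) →ₗ[ℝ] ℝ) + b.repr Q 1 • (b 1 : (Fin 3 → ℝ) →ₗ[ℝ] ℝ) := by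
    conv_lhs => rw [← b.sum_repr Q]
    simp only [Fin.sum_univ_two, Submodule.coe_add, Submodule.coe_smul]
  rw [hP, hQ]
  simp only [LinearMap.add_apply, LinearMap.smul_apply, smul_eq_mul]
  ring


/-- The triple ratio of three flags `(vᵢ, ηᵢ)` of `ℝP²`. -/
noncomputable def tripleRatio (v₀ v₁ v₂ : Fin 3 → ℝ)
    (η₀ η₁ η₂ : (Fin 3 → ℝ) →ₗ[ℝ] ℝ) : ℝ :=
  (η₀ v₁ * η₁ v₂ * η₂ v₀) / (η₀ v₂ * η₁ v₀ * η₂ v₁)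

/-- The `2×2` determinant of the coordinate vectors of `P` and `Q` with respect to
a basis `b` of a (2-dimensional) real module. -/
noncomputable def det2 {M : Type*} [AddCommGroup M] [Module ℝ M]
    (b : Module.Basis (Fin 2) ℝ M) (P Q : M) : ℝ :=
  b.repr P 0 * b.repr Q 1 - b.repr P 1 * b.repr Q 0

/-- The cross ratio of four vectors of a (2-dimensional) real module, computed with
respect to a basis `b`. -/
noncomputable def crossRatioIn {M : Type*} [AddCommGroup M] [Module ℝ M]
    (b : Module.Basis (Fin 2) ℝ M) (P₀ P₁ P₂ P₃ : M) : ℝ :=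
  (det2 b P₀ P₁ * det2 b P₂ P₃) / (det2 b P₀ P₃ * det2 b P₁ P₂)

/-- The submodule of linear functionals on `ℝ³` vanishing at a given vector `v`,
i.e. the pencil of lines of `ℝP²` through the point `[v]`. -/
noncomputable def annAt (v : Fin 3 → ℝ) : Submodule ℝ ((Fin 3 → ℝ) →ₗ[ℝ] ℝ) where
  carrier := {f | f v = 0}
  add_mem' := by
    intro f g hf hg
    simp only [Set.mem_setOf_eq, LinearMap.add_apply] at *
    rw [hf, hg, add_zero]
  zero_mem' := by simp
  smul_mem' := by
    intro c f hf
    simp only [Set.mem_setOf_eq, LinearMap.smul_apply] at *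
    rw [hf, smul_zero]

/-- An ordered quadruple of flags `(v i, η i)` is in general position: any three of
the vectors are linearly independent, any three of the functionals are linearly
independent, `η i (v i) = 0` and `η i (v j) ≠ 0` for `i ≠ j`. -/
def IsGenPosQuad (v : Fin 4 → Fin 3 → ℝ) (η : Fin 4 → (Fin 3 → ℝ) →ₗ[ℝ] ℝ) : Prop :=
  (∀ i, v i ≠ 0) ∧ (∀ i, η i ≠ 0) ∧ (∀ i, η i (v i) = 0) ∧
  (∀ i j k : Fin 4, i ≠ j → i ≠ k → j ≠ k → LinearIndependent ℝ ![v i, v j, v k]) ∧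
  (∀ i j k : Fin 4, i ≠ j → i ≠ k → j ≠ k → LinearIndependent ℝ ![η i, η j, η k]) ∧
  (∀ i j, i ≠ j → η i (v j) ≠ 0)

/-- The quadruple ratio, as the cross ratio `cross(η₀, ℓ₀₃, ℓ₀₂, ℓ₀₁)` of four lines
through `v₀`, equals the triple ratio `𝕋((v₀,η₀), (v₃,ℓ₂₃), (v₁,ℓ₁₂))` of the derived
flags.  Here, for `i ≠ j`, `L i j` is a (any) nonzero functional vanishing on
`v i` and `v j`, representing the line through the two points. -/
theorem quadrupleRatio_crossRatio_eq_tripleRatio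
    (v : Fin 4 → Fin 3 → ℝ) (η : Fin 4 → (Fin 3 → ℝ) →ₗ[ℝ] ℝ)
    (hgen : IsGenPosQuad v η)
    (L : Fin 4 → Fin 4 → (Fin 3 → ℝ) →ₗ[ℝ] ℝ)
    (hL : ∀ i j, i ≠ j → L i j ≠ 0 ∧ L i j (v i) = 0 ∧ L i j (v j) = 0)
    (b : Module.Basis (Fin 2) ℝ (annAt (v 0))) :
    crossRatioIn (M := annAt (v 0)) b ⟨η 0, hgen.2.2.1 0⟩ ⟨L 0 3, (hL 0 3 (by decide)).2.1⟩
      ⟨L 0 2, (hL 0 2 (by decide)).2.1⟩ ⟨L 0 1, (hL 0 1 (by decide)).2.1⟩ =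
      tripleRatio (v 0) (v 3) (v 1) (η 0) (L 2 3) (L 1 2) := by

  obtain ⟨hv, hη, hηv, hLIv, hLIη, hηvj⟩ := hgen
  have hLval : ∀ i j k : Fin 4, i ≠ j → i ≠ k → j ≠ k → L i j (v k) ≠ 0 := by
    intro i j k hij hik hjk h0
    exact (hL i j hij).1 (vanish_three_eq_zero (hLIv i j k hij hik hjk) _
      (hL i j hij).2.1 (hL i j hij).2.2 h0)
  -- abbreviations
  set c : ℝ := (b 0 : (Fin 3 → ℝ) →ₗ[ℝ] ℝ) (v 1) * (b 1 : (Fin 3 → ℝ) →ₗ[ℝ] ℝ) (v 3)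
      - (b 0 : (Fin 3 → ℝ) →ₗ[ℝ] ℝ) (v 3) * (b 1 : (Fin 3 → ℝ) →ₗ[ℝ] ℝ) (v 1) with hc_def
  have key : ∀ (P Q : annAt (v 0)),
      (P : (Fin 3 → ℝ) →ₗ[ℝ] ℝ) (v 1) * (Q : (Fin 3 → ℝ) →ₗ[ℝ] ℝ) (v 3)
        - (P : (Fin 3 → ℝ) →ₗ[ℝ] ℝ) (v 3) * (Q : (Fin 3 → ℝ) →ₗ[ℝ] ℝ) (v 1)
        = det2 b P Q * c := fun P Q => det2_expand b (v 1) (v 3) P Q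
  have hη01 : η 0 (v 1) ≠ 0 := hηvj 0 1 (by decide)
  have hη03 : η 0 (v 3) ≠ 0 := hηvj 0 3 (by decide)
  have hL013 : L 0 1 (v 3) ≠ 0 := hLval 0 1 3 (by decide) (by decide) (by decide)
  have hL021 : L 0 2 (v 1) ≠ 0 := hLval 0 2 1 (by decide) (by decide) (by decide)
  have hL023 : L 0 2 (v 3) ≠ 0 := hLval 0 2 3 (by decide) (by decide) (by decide)
  have hL031 : L 0 3 (v 1) ≠ 0 := hLval 0 3 1 (by decide) (by decide) (by decide)
  have hL230 : L 2 3 (v 0) ≠ 0 := hLval 2 3 0 (by decide) (by decide) (by decide)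
  have hL231 : L 2 3 (v 1) ≠ 0 := hLval 2 3 1 (by decide) (by decide) (by decide)
  have hL120 : L 1 2 (v 0) ≠ 0 := hLval 1 2 0 (by decide) (by decide) (by decide)
  have hL123 : L 1 2 (v 3) ≠ 0 := hLval 1 2 3 (by decide) (by decide) (by decide)
  have hL011 : L 0 1 (v 1) = 0 := (hL 0 1 (by decide)).2.2
  have hL033 : L 0 3 (v 3) = 0 := (hL 0 3 (by decide)).2.2
  have hL232 : L 2 3 (v 2) = 0 := (hL 2 3 (by decide)).2.1
  have hL233 : L 2 3 (v 3) = 0 := (hL 2 3 (by decide)).2.2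
  have hL121 : L 1 2 (v 1) = 0 := (hL 1 2 (by decide)).2.1
  have hL122 : L 1 2 (v 2) = 0 := (hL 1 2 (by decide)).2.2
  have hL020 : L 0 2 (v 0) = 0 := (hL 0 2 (by decide)).2.1
  have hL022 : L 0 2 (v 2) = 0 := (hL 0 2 (by decide)).2.2
  have hc : c ≠ 0 := by
    intro h0
    have := key ⟨η 0, hηv 0⟩ ⟨L 0 1, (hL 0 1 (by decide)).2.1⟩
    rw [h0, mul_zero] at this
    simp only [hL011, mul_zero, sub_zero] at this
    exact hη01 (by
      rcases mul_eq_zero.1 this with h | h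
      · exact h
      · exact absurd h hL013)
  -- the Plücker-type relation among L02, L23, L12 (all vanish at v 2)
  have hrel : L 0 2 (v 1) * (L 2 3 (v 0) * L 1 2 (v 3))
      = - (L 1 2 (v 0) * L 2 3 (v 1)) * L 0 2 (v 3) := by
    set F : (Fin 3 → ℝ) →ₗ[ℝ] ℝ := L 1 2 (v 0) • L 2 3 - L 2 3 (v 0) • L 1 2 with hF
    set G : (Fin 3 → ℝ) →ₗ[ℝ] ℝ := L 0 2 (v 1) • F - F (v 1) • L 0 2 with hG
    have hG0 : G = 0 := by
      apply vanish_three_eq_zero (hLIv 0 1 2 (by decide) (by decide) (by decide)) G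
      · simp only [hG, hF, LinearMap.sub_apply, LinearMap.smul_apply, smul_eq_mul, hL020,
          mul_zero, sub_zero]
        ring
      · simp only [hG, hF, LinearMap.sub_apply, LinearMap.smul_apply, smul_eq_mul]
        ring
      · simp only [hG, hF, LinearMap.sub_apply, LinearMap.smul_apply, smul_eq_mul, hL022,
          hL232, hL122, mul_zero, sub_zero, zero_sub, neg_eq_zero, mul_eq_zero]
        try ring
        try simp
    have := LinearMap.congr_fun hG0 (v 3)
    simp only [hG, hF, LinearMap.sub_apply, LinearMap.smul_apply, smul_eq_mul,
      LinearMap.zero_apply, hL233, hL121] at this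
    nlinarith [this]
  -- compute the four determinants
  have d1 : det2 (M := annAt (v 0)) b ⟨η 0, hηv 0⟩ ⟨L 0 3, (hL 0 3 (by decide)).2.1⟩ * c
      = - (η 0 (v 3) * L 0 3 (v 1)) := by
    rw [← key]; simp [hL033]
  have d2 : det2 (M := annAt (v 0)) b ⟨L 0 2, (hL 0 2 (by decide)).2.1⟩ ⟨L 0 1, (hL 0 1 (by decide)).2.1⟩ * c
      = L 0 2 (v 1) * L 0 1 (v 3) := by
    rw [← key]; simp [hL011]
  have d3 : det2 (M := annAt (v 0)) b ⟨η 0, hηv 0⟩ ⟨L 0 1, (hL 0 1 (by decide)).2.1⟩ * c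
      = η 0 (v 1) * L 0 1 (v 3) := by
    rw [← key]; simp [hL011]
  have d4 : det2 (M := annAt (v 0)) b ⟨L 0 3, (hL 0 3 (by decide)).2.1⟩ ⟨L 0 2, (hL 0 2 (by decide)).2.1⟩ * c
      = L 0 3 (v 1) * L 0 2 (v 3) := by
    rw [← key]; simp [hL033]
  rw [← eq_div_iff hc] at d1 d2 d3 d4
  have helper : ∀ A B C D : ℝ, (A / c * (B / c)) / ((C / c) * (D / c)) = A * B / (C * D) := by
    intro A B C D
    rcases eq_or_ne C 0 with h | h
    · simp [h]
    rcases eq_or_ne D 0 with h' | h'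
    · simp [h']
    field_simp
    try ring
  unfold crossRatioIn tripleRatio
  rw [d1, d2, d3, d4, helper]
  field_simp
  linear_combination (-1 : ℝ) * hrel
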